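/- For every real θ with 0 ≤ θ ≤ π/2, the inequality 1 − 1/(sin(2θ) + 1) ≥ min{cos²θ, sin²θ} holds, with equality exactly at θ = 0, π/4, π/2. -/

import Mathlib

open Real

lemma tolerance_key (s c : ℝ) (hs : 0 ≤ s) (hc : 0 ≤ c) (hpy : s ^ 2 + c ^ 2 = 1) :
    2 * s * c / (2 * s * c + 1) ≥ min (c ^ 2) (s ^ 2)
    ∧ (2 * s * c / (2 * s * c + 1) = min (c ^ 2) (s ^ 2) ↔ s = 0 ∨ s = c ∨ c = 0) := by
  have hd : 0 < 2 * s * c + 1 := by nlinarith [mul_nonneg hs hc]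
  constructor
  · rcases le_total (c ^ 2) (s ^ 2) with hle | hle
    · rw [min_eq_left hle, ge_iff_le, le_div_iff₀ hd]
      nlinarith [sq_nonneg (s - c), mul_nonneg hs hc,
        sq_nonneg (2 * s ^ 2 - 1), mul_nonneg (mul_nonneg hs hs) hs]
    · rw [min_eq_right hle, ge_iff_le, le_div_iff₀ hd]
      nlinarith [sq_nonneg (s - c), mul_nonneg hs hc,
        sq_nonneg (2 * c ^ 2 - 1), mul_nonneg (mul_nonneg hc hc) hc]
  · constructor
    · intro h
      have h' : 2 * s * c = min (c ^ 2) (s ^ 2) * (2 * s * c + 1) := by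
        rw [div_eq_iff (ne_of_gt hd)] at h
        linarith
      rcases le_total (c ^ 2) (s ^ 2) with hle | hle
      · rw [min_eq_left hle] at h'
        have hfac : c * (2 * s ^ 3 - c) = 0 := by nlinarith
        rcases mul_eq_zero.1 hfac with hc0 | hsc
        · exact Or.inr (Or.inr hc0)
        · have hcs : c ≤ s := by nlinarith [mul_nonneg hs hs]
          have : s = c := by nlinarith [mul_nonneg hs hs]
          exact Or.inr (Or.inl this)
      · rw [min_eq_right hle] at h'
        have hfac : s * (2 * c ^ 3 - s) = 0 := by nlinarith
        rcases mul_eq_zero.1 hfac with hs0 | hsc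
        · exact Or.inl hs0
        · have hsc' : s ≤ c := by nlinarith [mul_nonneg hc hc]
          have : s = c := by nlinarith [mul_nonneg hc hc]
          exact Or.inr (Or.inl this)
    · rintro (h | h | h)
      · have hc1 : c ^ 2 = 1 := by nlinarith
        rw [h, hc1]
        norm_num
      · have h2 : c ^ 2 = 1 / 2 := by nlinarith
        have h2' : s * c = 1 / 2 := by nlinarith
        rw [h, min_self, h2, show 2 * c * c = 2 * (c * c) by ring]
        rw [show c * c = c ^ 2 by ring, h2]
        norm_num
      · have hs1 : s ^ 2 = 1 := by nlinarith
        rw [h, hs1]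
        norm_num

/-- Comparison of white-noise tolerances: on `[0, π/2]`,
`1 − 1/(sin 2θ + 1) ≥ min{cos²θ, sin²θ}`, with equality exactly at `θ = 0, π/4, π/2`. -/
theorem tolerance_comparison (θ : ℝ) (h0 : 0 ≤ θ) (h1 : θ ≤ Real.pi / 2) :
    1 - 1 / (Real.sin (2 * θ) + 1) ≥ min (Real.cos θ ^ 2) (Real.sin θ ^ 2)
    ∧ (1 - 1 / (Real.sin (2 * θ) + 1) = min (Real.cos θ ^ 2) (Real.sin θ ^ 2)
        ↔ θ = 0 ∨ θ = Real.pi / 4 ∨ θ = Real.pi / 2) := by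
  have hpi := Real.pi_pos
  have hs : 0 ≤ Real.sin θ := Real.sin_nonneg_of_nonneg_of_le_pi h0 (by linarith)
  have hc : 0 ≤ Real.cos θ := Real.cos_nonneg_of_mem_Icc ⟨by linarith, h1⟩
  have hpy : Real.sin θ ^ 2 + Real.cos θ ^ 2 = 1 := Real.sin_sq_add_cos_sq θ
  obtain ⟨hge, hiff⟩ := tolerance_key (Real.sin θ) (Real.cos θ) hs hc hpy
  have hd : 0 < 2 * Real.sin θ * Real.cos θ + 1 := by
    nlinarith [mul_nonneg hs hc]
  have h2 : Real.sin (2 * θ) = 2 * Real.sin θ * Real.cos θ := Real.sin_two_mul θ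
  have hrw : 1 - 1 / (Real.sin (2 * θ) + 1)
      = 2 * Real.sin θ * Real.cos θ / (2 * Real.sin θ * Real.cos θ + 1) := by
    rw [h2]; field_simp; ring
  have hθ0 : Real.sin θ = 0 ↔ θ = 0 := by
    constructor
    · intro h
      exact Real.injOn_sin ⟨by linarith, h1⟩ ⟨by linarith, by linarith⟩
        (by rw [Real.sin_zero]; exact h)
    · intro h; rw [h, Real.sin_zero]
  have hθ2 : Real.cos θ = 0 ↔ θ = Real.pi / 2 := by
    constructor
    · intro h
      exact Real.injOn_cos ⟨h0, by linarith⟩ ⟨by linarith, by linarith⟩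
        (by rw [Real.cos_pi_div_two]; exact h)
    · intro h; rw [h, Real.cos_pi_div_two]
  have hθ4 : Real.sin θ = Real.cos θ ↔ θ = Real.pi / 4 := by
    constructor
    · intro h
      have hmem2 : Real.pi / 2 - θ ∈ Set.Icc (-(Real.pi / 2)) (Real.pi / 2) :=
        ⟨by linarith, by linarith⟩
      have heq : Real.sin θ = Real.sin (Real.pi / 2 - θ) := by
        rw [Real.sin_pi_div_two_sub]; exact h
      have := Real.injOn_sin ⟨by linarith, h1⟩ hmem2 heq
      linarith
    · intro h
      rw [h, Real.sin_pi_div_four, Real.cos_pi_div_four]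
  rw [hrw]
  exact ⟨hge, by rw [hiff, hθ0, hθ4, hθ2]⟩
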